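/- The number of full binary trees with n leaves avoiding the left comb pattern with m leaves equals the number of Dyck words of semilength n-1 avoiding the contiguous subword 0^(m-1), for all n ≥ 1 and m ≥ 2. -/
import Mathlib


inductive BTree : Type
  | leaf : BTree
  | node : BTree → BTree → BTree
  deriving DecidableEq

namespace BTree

def leaves : BTree → ℕ
  | leaf => 1
  | node l r => leaves l + leaves r

def Matches : BTree → BTree → Bool
  | _, leaf => true
  | leaf, node _ _ => false
  | node l r, node tl tr => Matches l tl && Matches r tr

def Contains : BTree → BTree → Bool
  | leaf, t => Matches leaf t
  | node l r, t => Matches (node l r) t || Contains l t || Contains r t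

def Avoids (T t : BTree) : Prop := Contains T t = false

end BTree

namespace BTree

def leftComb : ℕ → BTree
  | 0 => leaf
  | 1 => leaf
  | n + 2 => node (leftComb (n + 1)) leaf

end BTree

/-- `w` is a Dyck word of semilength `k` (`false` = 0 = down/open, `true` = 1 = up/close). -/
def IsDyckWord (k : ℕ) (w : List Bool) : Prop :=
  w.length = 2 * k ∧ w.count false = k ∧
    ∀ p : List Bool, p <+: w → p.count true ≤ p.count false

namespace BTreeDyckAux

open List DyckStep BTree

/-- Encode a full binary tree as a word: preorder, `false` = open at each node. -/
def toWord : BTree → List Bool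
  | .leaf => []
  | .node l r => false :: (toWord l ++ true :: toWord r)

lemma count_false_toWord (T : BTree) : (toWord T).count false + 1 = T.leaves := by
  induction T with
  | leaf => rfl
  | node l r ihl ihr => simp [toWord, leaves, count_cons, count_append]; omega

lemma count_true_toWord (T : BTree) : (toWord T).count true + 1 = T.leaves := by
  induction T with
  | leaf => rfl
  | node l r ihl ihr => simp [toWord, leaves, count_cons, count_append]; omega

lemma count_bal (T : BTree) : (toWord T).count true = (toWord T).count false := by
  have h1 := count_false_toWord T; have h2 := count_true_toWord T; omega

lemma length_toWord (T : BTree) : (toWord T).length + 2 = 2 * T.leaves := by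
  induction T with
  | leaf => rfl
  | node l r ihl ihr =>
    simp only [toWord, leaves, length_cons, length_append]
    omega

lemma prefix_count (T : BTree) : ∀ p : List Bool, p <+: toWord T →
    p.count true ≤ p.count false := by
  induction T with
  | leaf => intro p hp; simp [toWord] at hp; simp [hp]
  | node l r ihl ihr =>
    intro p hp
    rw [toWord] at hp
    rcases p with _ | ⟨b, q⟩
    · simp
    · rw [cons_prefix_cons] at hp
      obtain ⟨rfl, hq⟩ := hp
      obtain ⟨t, ht⟩ := hq
      rcases (List.append_eq_append_iff.mp ht) with ⟨a', ha1, ha2⟩ | ⟨c', hc1, hc2⟩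
      · have := ihl q ⟨a', ha1.symm⟩
        simp only [count_cons]
        simp
        omega
      · rcases c' with _ | ⟨b2, q2⟩
        · simp [hc1, count_cons, count_append, count_bal l]
        · simp only [cons_append, List.cons.injEq] at hc2
          obtain ⟨hb2, hc2'⟩ := hc2
          have := ihr q2 ⟨t, hc2'.symm⟩
          simp [hc1, ← hb2, count_cons, count_append, count_bal l]
          omega

def parseF : ℕ → List Bool → BTree × List Bool
  | 0, w => (.leaf, w)
  | fuel+1, w =>
    match w with
    | false :: w' =>
      match parseF fuel w' with
      | (l, true :: w2) =>
        match parseF fuel w2 with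
        | (r, w3) => (.node l r, w3)
      | _ => (.leaf, w)
    | _ => (.leaf, w)

lemma parseF_toWord (T : BTree) : ∀ (fuel : ℕ) (rest : List Bool),
    (toWord T).length ≤ fuel → rest.head? ≠ some false →
    parseF fuel (toWord T ++ rest) = (T, rest) := by
  induction T with
  | leaf =>
    intro fuel rest _ hrest
    rcases fuel with _ | f
    · rfl
    · rcases rest with _ | ⟨b, r'⟩
      · rfl
      · rcases b with _ | _
        · simp at hrest
        · rfl
  | node l r ihl ihr =>
    intro fuel rest hf hrest
    rw [toWord, length_cons, length_append, length_cons] at hf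
    rcases fuel with _ | f
    · omega
    · have h1 : toWord (.node l r) ++ rest
          = false :: (toWord l ++ (true :: (toWord r ++ rest))) := by
        simp [toWord]
      rw [h1, parseF]
      rw [ihl f (true :: (toWord r ++ rest)) (by omega) (by simp)]
      dsimp only
      rw [ihr f rest (by omega) hrest]

lemma toWord_injective : Function.Injective toWord := by
  intro T1 T2 h
  have h1 := parseF_toWord T1 (toWord T2).length [] (by rw [h]) (by simp)
  have h2 := parseF_toWord T2 (toWord T2).length [] le_rfl (by simp)
  rw [append_nil] at h1 h2
  rw [h] at h1
  have := h1.symm.trans h2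
  exact (Prod.mk.injEq _ _ _ _ ▸ this).1

lemma rep_prefix_append (k : ℕ) : ∀ (A B : List Bool),
    (replicate k false <+: A ++ true :: B ↔ replicate k false <+: A) := by
  induction k with
  | zero => intro A B; simp
  | succ k ih =>
    intro A B
    rcases A with _ | ⟨a, A'⟩
    · simp only [nil_append, replicate_succ]
      constructor
      · intro h
        rw [cons_prefix_cons] at h
        exact absurd h.1 (by simp)
      · intro h
        have := h.length_le
        simp at this
    · simp only [cons_append, replicate_succ, cons_prefix_cons]
      rw [ih A' B]

lemma rep_infix_append (k : ℕ) (hk : 0 < k) : ∀ (A B : List Bool),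
    (replicate k false <:+: A ++ true :: B ↔
      replicate k false <:+: A ∨ replicate k false <:+: B) := by
  intro A
  induction A with
  | nil =>
    intro B
    simp only [nil_append, infix_cons_iff]
    constructor
    · rintro (h | h)
      · rcases k with _ | k; · omega
        rw [replicate_succ, cons_prefix_cons] at h
        exact absurd h.1 (by simp)
      · exact Or.inr h
    · rintro (h | h)
      · have := h.length_le
        simp at this
        omega
      · exact Or.inr h
  | cons a A' ih =>
    intro B
    simp only [cons_append, infix_cons_iff, ih B]
    rw [← cons_append, rep_prefix_append k (a :: A') B]
    tauto

lemma matches_leftComb (k : ℕ) : ∀ (T : BTree),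
    (Matches T (leftComb (k+1)) = true ↔ replicate k false <+: toWord T) := by
  induction k with
  | zero =>
    intro T
    have : leftComb 1 = BTree.leaf := rfl
    rw [this]
    constructor
    · intro _; simp
    · intro _; cases T <;> rfl
  | succ k ih =>
    intro T
    have hc : leftComb (k+2) = BTree.node (leftComb (k+1)) BTree.leaf := rfl
    rw [hc]
    cases T with
    | leaf =>
      simp only [Matches]
      constructor
      · intro h; exact absurd h (by simp)
      · intro h
        have := h.length_le
        simp [toWord] at this
    | node l r =>
      simp only [Matches, Bool.and_eq_true]
      have hr : Matches r BTree.leaf = true := by cases r <;> rfl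
      rw [toWord, replicate_succ, cons_prefix_cons]
      rw [rep_prefix_append k (toWord l) (toWord r)]
      simp [hr, ih l]

lemma contains_leftComb (k : ℕ) : ∀ (T : BTree),
    (Contains T (leftComb (k+2)) = true ↔ replicate (k+1) false <:+: toWord T) := by
  intro T
  induction T with
  | leaf =>
    have hc : leftComb (k+2) = BTree.node (leftComb (k+1)) BTree.leaf := rfl
    rw [hc]
    simp only [Contains, Matches]
    constructor
    · intro h; exact absurd h (by simp)
    · intro h
      have := h.length_le
      simp [toWord] at this
  | node l r ihl ihr =>
    simp only [Contains, Bool.or_eq_true, ihl, ihr, matches_leftComb (k+1) (BTree.node l r)]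
    rw [toWord, infix_cons_iff]
    rw [rep_infix_append (k+1) (by omega) (toWord l) (toWord r)]
    constructor
    · rintro ((h | h) | h)
      · exact Or.inl h
      · exact Or.inr (Or.inl h)
      · exact Or.inr (Or.inr h)
    · rintro (h | h | h)
      · exact Or.inl (Or.inl h)
      · exact Or.inl (Or.inr h)
      · exact Or.inr h

def sb : DyckStep → Bool
  | U => false
  | D => true

def bs : Bool → DyckStep
  | false => U
  | true => D

lemma bs_injective : Function.Injective bs := by
  intro a b h; cases a <;> cases b <;> simp [bs] at h ⊢

lemma sb_bs (w : List Bool) : (w.map bs).map sb = w := by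
  rw [map_map]
  have : sb ∘ bs = id := by funext b; cases b <;> rfl
  simp [this]

lemma count_bool (w : List Bool) : w.count true + w.count false = w.length := by
  induction w with
  | nil => rfl
  | cons a t ih => cases a <;> simp [count_cons, ih] <;> omega

/-- build a `DyckWord` from an `IsDyckWord`-style witness -/
def mkDyck (w : List Bool) (hbal : w.count true = w.count false)
    (hpre : ∀ p : List Bool, p <+: w → p.count true ≤ p.count false) : DyckWord where
  toList := w.map bs
  count_U_eq_count_D := by
    have hU : (w.map bs).count U = w.count false := by
      have := List.count_map_of_injective w bs bs_injective false
      simpa [bs] using this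
    have hD : (w.map bs).count D = w.count true := by
      have := List.count_map_of_injective w bs bs_injective true
      simpa [bs] using this
    rw [hU, hD, hbal]
  count_D_le_count_U i := by
    rw [← List.map_take]
    have hU : ((w.take i).map bs).count U = (w.take i).count false := by
      have := List.count_map_of_injective (w.take i) bs bs_injective false
      simpa [bs] using this
    have hD : ((w.take i).map bs).count D = (w.take i).count true := by
      have := List.count_map_of_injective (w.take i) bs bs_injective true
      simpa [bs] using this
    rw [hU, hD]
    exact hpre _ (take_prefix i w)

lemma exists_tree (p : DyckWord) : ∃ T : BTree,
    toWord T = p.toList.map sb ∧ T.leaves = p.semilength + 1 := by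
  by_cases h : p = 0
  · subst h
    exact ⟨.leaf, by simp [toWord]; rfl, by simp [BTree.leaves]⟩
  · obtain ⟨Tl, hl1, hl2⟩ := exists_tree p.insidePart
    obtain ⟨Tr, hr1, hr2⟩ := exists_tree p.outsidePart
    refine ⟨.node Tl Tr, ?_, ?_⟩
    · have hp := DyckWord.nest_insidePart_add_outsidePart h
      have : p.toList = (U :: p.insidePart.toList ++ [D]) ++ p.outsidePart.toList := by
        conv_lhs => rw [← hp]
        rfl
      rw [this]
      simp only [toWord, hl1, hr1, map_append, map_cons, map_nil, sb, cons_append,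
        append_assoc, singleton_append, nil_append]
    · have := DyckWord.semilength_insidePart_add_semilength_outsidePart_add_one h
      simp only [BTree.leaves, hl2, hr2]
      omega
termination_by p.semilength
decreasing_by
  · exact DyckWord.semilength_insidePart_lt h
  · exact DyckWord.semilength_outsidePart_lt h

end BTreeDyckAux

open BTreeDyckAux List in
theorem stmt_17 (n m : ℕ) (hn : 1 ≤ n) (hm : 2 ≤ m) :
    Nat.card {T : BTree // T.leaves = n ∧ T.Avoids (BTree.leftComb m)} =
      Nat.card {w : List Bool // IsDyckWord (n - 1) w ∧
        ¬ (List.replicate (m - 1) false) <:+: w} := by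
  obtain ⟨k, rfl⟩ : ∃ k, m = k + 2 := ⟨m - 2, by omega⟩
  have hm1 : k + 2 - 1 = k + 1 := rfl
  refine Nat.card_eq_of_bijective
    (fun T => ⟨toWord T.1, ?_, ?_⟩) ⟨?_, ?_⟩
  · obtain ⟨T, hT1, hT2⟩ := T
    dsimp only
    refine ⟨?_, ?_, prefix_count T⟩
    · have := length_toWord T
      rw [hT1] at this
      omega
    · have := count_false_toWord T
      rw [hT1] at this
      omega
  · obtain ⟨T, hT1, hT2⟩ := T
    dsimp only
    rw [hm1]
    intro hinf
    rw [← contains_leftComb k T] at hinf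
    rw [BTree.Avoids, hinf] at hT2
    simp at hT2
  · intro T1 T2 h
    simp only [Subtype.mk.injEq] at h
    exact Subtype.ext (toWord_injective h)
  · rintro ⟨w, ⟨hlen, hcf, hpre⟩, havoid⟩
    have hbal : w.count true = w.count false := by
      have := count_bool w
      omega
    obtain ⟨T, hT1, hT2⟩ := exists_tree (mkDyck w hbal hpre)
    have hw : (mkDyck w hbal hpre).toList.map sb = w := sb_bs w
    rw [hw] at hT1
    have hsemi : (mkDyck w hbal hpre).semilength = n - 1 := by
      have : (mkDyck w hbal hpre).toList = w.map bs := rfl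
      rw [DyckWord.semilength, this]
      have := List.count_map_of_injective w bs bs_injective false
      simpa [bs, hcf] using this
    have hleaves : T.leaves = n := by
      rw [hT2, hsemi]
      omega
    have havoidT : T.Avoids (BTree.leftComb (k + 2)) := by
      rw [BTree.Avoids]
      rcases Bool.eq_false_or_eq_true (T.Contains (BTree.leftComb (k + 2))) with h | h
      · rw [contains_leftComb k T, hT1] at h
        rw [hm1] at havoid
        exact absurd h havoid
      · exact h
    exact ⟨⟨T, hleaves, havoidT⟩, Subtype.ext hT1⟩
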